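/- arXiv:2011.00234 — 2 statements merged into one kernel-verified Lean document; each statement's English description precedes it below -/
import Mathlib

section
/- Assume the (A3) setting. Define k(y) = (y_d ∧ 1)^{β₁} (y_d ∨ 1)^{β₂} |y|^{−d−α−β₁−β₂} (1 + |log y_d|)^{β₃} (log(1 + |y|/(y_d ∨ 1)))^{β₄} for y ∈ ℝ^d_+, and let z⁰ = (0̃, 1/4). Then there exists a constant c > 0, depending only on d, α, β₁, β₂, β₃, β₄ and C₂, such that J(z, y) ≥ c k(y) for all z ∈ B(z⁰, 1/8) and all y ∈ ℝ^d_+ ∖ D(1,1). -/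
open MeasureTheory Real

noncomputable section

/-- Points of `ℝ^d`, written as pairs `(x̃, x_d) ∈ ℝ^{d-1} × ℝ` (here `m = d - 1`). -/
abbrev Pt (m : ℕ) := EuclideanSpace ℝ (Fin m) × ℝ

/-- The Euclidean norm on `Pt m`. -/
noncomputable def nrm {m : ℕ} (x : Pt m) : ℝ := Real.sqrt (‖x.1‖ ^ 2 + x.2 ^ 2)

/-- The box `D_0̃(a,b) = {y = (ỹ, y_d) : |ỹ| < a, 0 < y_d < b}`. -/
def Dbox {m : ℕ} (a b : ℝ) : Set (Pt m) :=
  {y | ‖y.1‖ < a ∧ 0 < y.2 ∧ y.2 < b}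

/-- The function `B̃(x,y)` of assumption (A3). -/
noncomputable def Btilde {m : ℕ} (β₁ β₂ β₃ β₄ : ℝ) (x y : Pt m) : ℝ :=
  (min (min x.2 y.2 / nrm (x - y)) 1) ^ β₁ * (min (max x.2 y.2 / nrm (x - y)) 1) ^ β₂ *
    (Real.log (1 + min (max x.2 y.2) (nrm (x - y)) / min (min x.2 y.2) (nrm (x - y)))) ^ β₃ *
    (Real.log (1 + nrm (x - y) / min (max x.2 y.2) (nrm (x - y)))) ^ β₄

/-- The function `k(y)` of Lemma 7.1. -/
noncomputable def kfun {m : ℕ} (d : ℕ) (α β₁ β₂ β₃ β₄ : ℝ) (y : Pt m) : ℝ :=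
  (min y.2 1) ^ β₁ * (max y.2 1) ^ β₂ * nrm y ^ (-(d : ℝ) - α - β₁ - β₂) *
    (1 + |Real.log y.2|) ^ β₃ * (Real.log (1 + nrm y / max y.2 1)) ^ β₄

set_option maxHeartbeats 1000000

lemma nrm_nonneg' {m : ℕ} (x : Pt m) : 0 ≤ nrm x := Real.sqrt_nonneg _

lemma snd_le_nrm {m : ℕ} (x : Pt m) : |x.2| ≤ nrm x := by
  rw [nrm, Real.le_sqrt (abs_nonneg _) (by positivity)]
  nlinarith [sq_nonneg ‖x.1‖, sq_abs x.2]

lemma fst_le_nrm {m : ℕ} (x : Pt m) : ‖x.1‖ ≤ nrm x := by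
  rw [nrm, Real.le_sqrt (norm_nonneg x.1) (by positivity)]
  nlinarith [sq_nonneg x.2]

lemma nrm_neg' {m : ℕ} (x : Pt m) : nrm (-x) = nrm x := by simp [nrm]

lemma nrm_sq {m : ℕ} (x : Pt m) : nrm x ^ 2 = ‖x.1‖^2 + x.2^2 :=
  Real.sq_sqrt (by positivity)

lemma nrm_add_le {m : ℕ} (x y : Pt m) : nrm (x + y) ≤ nrm x + nrm y := by
  have hs := nrm_sq x
  have ht := nrm_sq y
  have hs0 := nrm_nonneg' x
  have ht0 := nrm_nonneg' y
  have hcs : ‖x.1‖ * ‖y.1‖ + |x.2| * |y.2| ≤ nrm x * nrm y := by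
    nlinarith [sq_nonneg (‖x.1‖ * |y.2| - ‖y.1‖ * |x.2|), mul_nonneg hs0 ht0,
      mul_nonneg (mul_nonneg (norm_nonneg x.1) (norm_nonneg y.1))
        (mul_nonneg (abs_nonneg x.2) (abs_nonneg y.2)),
      sq_abs x.2, sq_abs y.2, norm_nonneg x.1, norm_nonneg y.1, abs_nonneg x.2, abs_nonneg y.2]
  have h1 : ‖(x+y).1‖ ≤ ‖x.1‖ + ‖y.1‖ := norm_add_le _ _
  have h2 : |(x+y).2| ≤ |x.2| + |y.2| := abs_add_le _ _
  have h1' : ‖(x+y).1‖^2 ≤ (‖x.1‖ + ‖y.1‖)^2 := pow_le_pow_left₀ (norm_nonneg _) h1 2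
  have h2' : (x+y).2^2 ≤ (|x.2| + |y.2|)^2 := by
    rw [← sq_abs]; exact pow_le_pow_left₀ (abs_nonneg _) h2 2
  have key : ‖(x+y).1‖^2 + (x+y).2^2 ≤ (nrm x + nrm y)^2 := by
    nlinarith [sq_abs x.2, sq_abs y.2]
  calc nrm (x+y) = Real.sqrt (‖(x+y).1‖^2 + (x+y).2^2) := rfl
    _ ≤ Real.sqrt ((nrm x + nrm y)^2) := Real.sqrt_le_sqrt key
    _ = nrm x + nrm y := Real.sqrt_sq (by positivity)

lemma combo {a b L X : ℝ} (ha : 0 < a) (hb : 0 ≤ b) (h1 : a ≤ L) (h2 : X - b ≤ L) :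
    X ≤ (1 + b / a) * L := by
  have h3 : (b/a) * a ≤ (b/a) * L := mul_le_mul_of_nonneg_left h1 (div_nonneg hb ha.le)
  have h4 : (b/a) * a = b := div_mul_cancel₀ b ha.ne'
  have h5 : (1 + b/a) * L = L + (b/a) * L := by ring
  linarith

theorem stmt_8 (d : ℕ) (hd : 2 ≤ d) (α β₁ β₂ β₃ β₄ C₂ : ℝ)
    (hα0 : 0 < α) (hα2 : α < 2)
    (hβ₁ : 0 ≤ β₁) (hβ₂ : 0 ≤ β₂) (hβ₃ : 0 ≤ β₃) (hβ₄ : 0 ≤ β₄)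
    (h13 : 0 < β₃ → 0 < β₁) (h24 : 0 < β₄ → 0 < β₂) (hC₂ : 1 ≤ C₂)
    (B : Pt (d - 1) → Pt (d - 1) → ℝ)
    (hB0 : ∀ x y, 0 ≤ B x y)
    (hBl : ∀ x y : Pt (d - 1), 0 < x.2 → 0 < y.2 →
      C₂⁻¹ * Btilde β₁ β₂ β₃ β₄ x y ≤ B x y)
    (hBu : ∀ x y : Pt (d - 1), 0 < x.2 → 0 < y.2 →
      B x y ≤ C₂ * Btilde β₁ β₂ β₃ β₄ x y) :
    ∃ c : ℝ, 0 < c ∧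
      ∀ z y : Pt (d - 1),
        nrm (z - ((0 : EuclideanSpace ℝ (Fin (d - 1))), (1 / 4 : ℝ))) < 1 / 8 →
        0 < y.2 → y ∉ (Dbox 1 1 : Set (Pt (d - 1))) →
        c * kfun d α β₁ β₂ β₃ β₄ y ≤ nrm (z - y) ^ (-(d : ℝ) - α) * B z y := by
  have hC2pos : 0 < C₂ := lt_of_lt_of_le one_pos hC₂
  have hlog43 : 0 < Real.log (4/3) := Real.log_pos (by norm_num)
  have hlog2 : 0 < Real.log 2 := Real.log_pos (by norm_num)
  have hlog8 : 0 ≤ Real.log 8 := Real.log_nonneg (by norm_num)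
  have hlog135 : 0 ≤ Real.log (13/5) := Real.log_nonneg (by norm_num)
  set K₃ : ℝ := 1 + (1 + Real.log 8) / Real.log (4/3) with hK₃def
  set K₄ : ℝ := 1 + Real.log (13/5) / Real.log 2 with hK₄def
  have hK₃ : 0 < K₃ := by
    have : 0 ≤ (1 + Real.log 8) / Real.log (4/3) := div_nonneg (by linarith) hlog43.le
    simp only [hK₃def]; linarith
  have hK₄ : 0 < K₄ := by
    have : 0 ≤ Real.log (13/5) / Real.log 2 := div_nonneg hlog135 hlog2.le
    simp only [hK₄def]; linarith
  refine ⟨C₂⁻¹ * ((2:ℝ)^(-(d:ℝ)-α) * ((16:ℝ)^(-β₁) * ((16:ℝ)^(-β₂) *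
      (K₃^(-β₃) * K₄^(-β₄))))), ?_, ?_⟩
  · apply mul_pos (inv_pos.mpr hC2pos)
    apply mul_pos (Real.rpow_pos_of_pos (by norm_num) _)
    apply mul_pos (Real.rpow_pos_of_pos (by norm_num) _)
    apply mul_pos (Real.rpow_pos_of_pos (by norm_num) _)
    exact mul_pos (Real.rpow_pos_of_pos hK₃ _) (Real.rpow_pos_of_pos hK₄ _)
  intro z y hz hy2 hyD
  set r := nrm (z - y) with hrdef
  set R := nrm y with hRdef
  -- basic geometry
  have hz2 : |z.2 - 1/4| < 1/8 := by
    have h := (snd_le_nrm (z - ((0 : EuclideanSpace ℝ (Fin (d-1))), (1/4:ℝ)))).trans_lt hz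
    simpa using h
  rw [abs_lt] at hz2
  have hz2a : 1/8 < z.2 := by linarith [hz2.1]
  have hz2b : z.2 < 3/8 := by linarith [hz2.2]
  have hz0norm : nrm ((0 : EuclideanSpace ℝ (Fin (d-1))), (1/4:ℝ)) = 1/4 := by
    rw [nrm]
    have h0 : ‖((0 : EuclideanSpace ℝ (Fin (d-1))), (1/4:ℝ)).1‖ = 0 := norm_zero
    rw [h0, show (0:ℝ)^2 + (((0 : EuclideanSpace ℝ (Fin (d-1))), (1/4:ℝ)).2)^2 = (1/4:ℝ)^2 by norm_num,
      Real.sqrt_sq (by norm_num)]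
  have hnz : nrm z < 3/8 := by
    have h := nrm_add_le (z - ((0 : EuclideanSpace ℝ (Fin (d-1))), (1/4:ℝ)))
      ((0 : EuclideanSpace ℝ (Fin (d-1))), (1/4:ℝ))
    rw [sub_add_cancel, hz0norm] at h
    linarith
  have hR1 : 1 ≤ R := by
    simp only [Dbox, Set.mem_setOf_eq, not_and, not_lt] at hyD
    rcases lt_or_ge ‖y.1‖ 1 with h|h
    · exact le_trans (le_trans (hyD h hy2) (le_abs_self _)) (snd_le_nrm y)
    · exact le_trans h (fst_le_nrm y)
  have hRpos : 0 < R := lt_of_lt_of_le one_pos hR1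
  have hy2R : y.2 ≤ R := (le_abs_self _).trans (snd_le_nrm y)
  have hmaxR : max y.2 1 ≤ R := max_le hy2R hR1
  have hrlow : 5/8 * R ≤ r := by
    have h := nrm_add_le (y - z) z
    rw [sub_add_cancel] at h
    have h2 : nrm (y - z) = r := by rw [hrdef, ← nrm_neg' (y - z), neg_sub]
    rw [h2] at h
    linarith
  have hrup : r ≤ 2 * R := by
    have h := nrm_add_le z (-y)
    rw [nrm_neg'] at h
    have h2 : z + -y = z - y := by rw [sub_eq_add_neg]
    rw [h2] at h
    linarith
  have hr58 : 5/8 ≤ r := by linarith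
  have hrpos : 0 < r := by linarith
  -- names for the four factors
  have hminzy : 0 ≤ min z.2 y.2 := le_min (by linarith) hy2.le
  have hm1 : 0 < min y.2 1 := lt_min hy2 one_pos
  have hm2 : 0 < max y.2 1 := lt_of_lt_of_le one_pos (le_max_right _ _)
  -- factor 1
  have hA : min y.2 1 / (16 * R) ≤ min (min z.2 y.2 / r) 1 := by
    have hnum : min y.2 1 / 8 ≤ min z.2 y.2 := by
      rcases le_total y.2 (1/8) with h|h
      · rw [min_eq_right (by linarith : y.2 ≤ z.2), min_eq_left (by linarith : y.2 ≤ 1)]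
        linarith
      · have h1 : 1/8 ≤ min z.2 y.2 := le_min hz2a.le h
        have h2 : min y.2 1 ≤ 1 := min_le_right _ _
        linarith
    apply le_min
    · calc min y.2 1 / (16 * R) = (min y.2 1 / 8) / (2 * R) := by ring
        _ ≤ min z.2 y.2 / r := div_le_div₀ hminzy hnum hrpos hrup
    · rw [div_le_one (by positivity)]
      have := min_le_right y.2 1
      linarith
  -- factor 2
  have hB' : max y.2 1 / (16 * R) ≤ min (max z.2 y.2 / r) 1 := by
    have hnum : max y.2 1 / 8 ≤ max z.2 y.2 := by
      rcases le_total y.2 1 with h|h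
      · rw [max_eq_right h]
        have := le_max_left z.2 y.2
        linarith
      · rw [max_eq_left h]
        have := le_max_right z.2 y.2
        linarith
    apply le_min
    · calc max y.2 1 / (16 * R) = (max y.2 1 / 8) / (2 * R) := by ring
        _ ≤ max z.2 y.2 / r := div_le_div₀ (le_trans hy2.le (le_max_right _ _)) hnum hrpos hrup
    · rw [div_le_one (by positivity)]
      linarith
  -- factor 3
  set Dn := min (min z.2 y.2) r with hDndef
  set Nm := min (max z.2 y.2) r with hNmdef
  have hDnpos : 0 < Dn := lt_min (lt_min (by linarith) hy2) hrpos
  have hDnle : Dn ≤ 3/8 := le_trans (min_le_left _ _) (le_trans (min_le_left _ _) (by linarith))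
  have hNm18 : 1/8 ≤ Nm := le_min (le_trans (by linarith) (le_max_left _ _)) (by linarith)
  have hNmr : Nm ≤ r := min_le_right _ _
  have hNmpos : 0 < Nm := lt_of_lt_of_le (by norm_num) hNm18
  have hL3a : Real.log (4/3) ≤ Real.log (1 + Nm/Dn) := by
    apply Real.log_le_log (by norm_num)
    rw [show (4:ℝ)/3 = 1 + 1/3 by norm_num]
    have : (1:ℝ)/3 ≤ Nm/Dn := by
      rw [le_div_iff₀ hDnpos]; linarith
    linarith
  have hL3pos : 0 < Real.log (1 + Nm/Dn) := lt_of_lt_of_le hlog43 hL3a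
  have hL3b : |Real.log y.2| - Real.log 8 ≤ Real.log (1 + Nm/Dn) := by
    rcases lt_or_ge y.2 (1/8) with h|h
    · have hDn : Dn = y.2 := by
        rw [hDndef, min_eq_right (by linarith : y.2 ≤ z.2), min_eq_left (by linarith : y.2 ≤ r)]
      have habs : |Real.log y.2| = -Real.log y.2 :=
        abs_of_nonpos (Real.log_nonpos hy2.le (by linarith))
      have h18 : Real.log ((1/8)/y.2) ≤ Real.log (1 + Nm/Dn) := by
        apply Real.log_le_log (by positivity)
        rw [hDn]
        have : (1/8:ℝ)/y.2 ≤ Nm/y.2 := (div_le_div_iff_of_pos_right hy2).mpr hNm18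
        have h0 : 0 ≤ Nm/y.2 := div_nonneg hNmpos.le hy2.le
        linarith
      rw [Real.log_div (by norm_num) (ne_of_gt hy2), show (1:ℝ)/8 = (8:ℝ)⁻¹ by norm_num,
        Real.log_inv] at h18
      linarith
    · rcases le_total y.2 1 with h1|h1
      · have habs : |Real.log y.2| ≤ Real.log 8 := by
          rw [abs_of_nonpos (Real.log_nonpos hy2.le h1)]
          have h2 := Real.log_le_log (by norm_num : (0:ℝ) < 1/8) h
          rw [show (1:ℝ)/8 = (8:ℝ)⁻¹ by norm_num, Real.log_inv] at h2
          linarith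
        linarith
      · have habs : |Real.log y.2| = Real.log y.2 := abs_of_nonneg (Real.log_nonneg h1)
        have hmax : max z.2 y.2 = y.2 := max_eq_right (by linarith)
        have hNm58 : 5/8 * y.2 ≤ Nm := by
          rw [hNmdef, hmax]
          exact le_min (by linarith) (by linarith)
        have hratio : y.2 ≤ 1 + Nm/Dn := by
          have : y.2 ≤ Nm/Dn := by
            rw [le_div_iff₀ hDnpos]
            have hmul : y.2 * Dn ≤ y.2 * (3/8) :=
              mul_le_mul_of_nonneg_left hDnle (by linarith)
            linarith
          linarith
        have h3 := Real.log_le_log (by linarith) hratio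
        linarith
  have claim3 : 1 + |Real.log y.2| ≤ K₃ * Real.log (1 + Nm/Dn) := by
    have h := combo (a := Real.log (4/3)) (b := 1 + Real.log 8) (L := Real.log (1 + Nm/Dn))
      (X := 1 + |Real.log y.2|) hlog43 (by linarith) hL3a (by linarith)
    rw [hK₃def]
    exact h
  -- factor 4
  have hT1 : 1 ≤ R / max y.2 1 := (one_le_div hm2).mpr hmaxR
  have hL4a : Real.log 2 ≤ Real.log (1 + r/Nm) := by
    apply Real.log_le_log (by norm_num)
    have : 1 ≤ r/Nm := (one_le_div hNmpos).mpr hNmr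
    linarith
  have hL4pos : 0 < Real.log (1 + r/Nm) := lt_of_lt_of_le hlog2 hL4a
  have hL4b : Real.log (1 + R / max y.2 1) - Real.log (13/5) ≤ Real.log (1 + r/Nm) := by
    rcases le_or_gt r (max z.2 y.2) with h|h
    · have hy2r : r ≤ y.2 := by
        rcases le_total z.2 y.2 with h'|h'
        · rwa [max_eq_right h'] at h
        · rw [max_eq_left h'] at h; linarith
      have hT85 : R / max y.2 1 ≤ 8/5 := by
        have hy2pos' : 0 < y.2 := by linarith
        have hh1 : R / max y.2 1 ≤ R / y.2 :=
          div_le_div_of_nonneg_left hRpos.le hy2pos' (le_max_left _ _)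
        have hh2 : R / y.2 ≤ 8/5 := by
          rw [div_le_iff₀ hy2pos']; linarith
        linarith
      have hlogT : Real.log (1 + R / max y.2 1) ≤ Real.log (13/5) := by
        apply Real.log_le_log (by linarith)
        linarith
      linarith
    · have hNmeq : Nm = max z.2 y.2 := min_eq_left h.le
      have hNm1 : Nm ≤ max y.2 1 := by
        rw [hNmeq]
        apply max_le
        · linarith [le_max_right y.2 (1:ℝ)]
        · exact le_max_left _ _
      have hratio : 5/8 * (R / max y.2 1) ≤ r / Nm := by
        have : 5/8 * (R / max y.2 1) = (5/8 * R) / max y.2 1 := by ring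
        rw [this]
        exact div_le_div₀ hrpos.le hrlow hNmpos hNm1
      have key : (5/13) * (1 + R / max y.2 1) ≤ 1 + r/Nm := by
        linarith
      have h5 := Real.log_le_log (by linarith) key
      rw [Real.log_mul (by norm_num) (by positivity : (1 + R / max y.2 1) ≠ 0)] at h5
      rw [show (5:ℝ)/13 = ((13:ℝ)/5)⁻¹ by norm_num, Real.log_inv] at h5
      linarith
  have claim4 : Real.log (1 + R / max y.2 1) ≤ K₄ * Real.log (1 + r/Nm) := by
    have h := combo (a := Real.log 2) (b := Real.log (13/5)) (L := Real.log (1 + r/Nm))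
      (X := Real.log (1 + R / max y.2 1)) hlog2 hlog135 hL4a (by linarith)
    rw [hK₄def]
    exact h
  -- assembly
  have hB := hBl z y (by linarith) hy2
  have hre_nonneg : (0:ℝ) ≤ r ^ (-(d:ℝ) - α) := Real.rpow_nonneg hrpos.le _
  refine le_trans ?_ (mul_le_mul_of_nonneg_left hB hre_nonneg)
  simp only [kfun, Btilde, ← hrdef, ← hRdef, ← hDndef, ← hNmdef]
  -- rpow factor bounds
  have h1 : (16:ℝ)^(-β₁) * ((min y.2 1)^β₁ * R^(-β₁)) ≤ (min (min z.2 y.2 / r) 1)^β₁ := by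
    have hh := Real.rpow_le_rpow (by positivity) hA hβ₁
    rw [Real.div_rpow hm1.le (by positivity), Real.mul_rpow (by norm_num) hRpos.le] at hh
    calc (16:ℝ)^(-β₁) * ((min y.2 1)^β₁ * R^(-β₁))
        = (min y.2 1)^β₁ / ((16:ℝ)^β₁ * R^β₁) := by
          rw [Real.rpow_neg (by norm_num : (0:ℝ) ≤ 16), Real.rpow_neg hRpos.le,
            div_eq_mul_inv, mul_inv]
          ring
      _ ≤ (min (min z.2 y.2 / r) 1)^β₁ := hh
  have h2 : (16:ℝ)^(-β₂) * ((max y.2 1)^β₂ * R^(-β₂)) ≤ (min (max z.2 y.2 / r) 1)^β₂ := by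
    have hh := Real.rpow_le_rpow (by positivity) hB' hβ₂
    rw [Real.div_rpow hm2.le (by positivity), Real.mul_rpow (by norm_num) hRpos.le] at hh
    calc (16:ℝ)^(-β₂) * ((max y.2 1)^β₂ * R^(-β₂))
        = (max y.2 1)^β₂ / ((16:ℝ)^β₂ * R^β₂) := by
          rw [Real.rpow_neg (by norm_num : (0:ℝ) ≤ 16), Real.rpow_neg hRpos.le,
            div_eq_mul_inv, mul_inv]
          ring
      _ ≤ (min (max z.2 y.2 / r) 1)^β₂ := hh
  have h3 : K₃^(-β₃) * (1 + |Real.log y.2|)^β₃ ≤ (Real.log (1 + Nm/Dn))^β₃ := by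
    have hh := Real.rpow_le_rpow (by positivity) claim3 hβ₃
    rw [Real.mul_rpow hK₃.le hL3pos.le] at hh
    calc K₃^(-β₃) * (1 + |Real.log y.2|)^β₃
        ≤ K₃^(-β₃) * (K₃^β₃ * (Real.log (1 + Nm/Dn))^β₃) :=
          mul_le_mul_of_nonneg_left hh (Real.rpow_nonneg hK₃.le _)
      _ = (Real.log (1 + Nm/Dn))^β₃ := by
          rw [← mul_assoc, ← Real.rpow_add hK₃, neg_add_cancel, Real.rpow_zero, one_mul]
  have hlogT0 : 0 ≤ Real.log (1 + R / max y.2 1) := Real.log_nonneg (by linarith)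
  have h4 : K₄^(-β₄) * (Real.log (1 + R / max y.2 1))^β₄ ≤ (Real.log (1 + r/Nm))^β₄ := by
    have hh := Real.rpow_le_rpow hlogT0 claim4 hβ₄
    rw [Real.mul_rpow hK₄.le hL4pos.le] at hh
    calc K₄^(-β₄) * (Real.log (1 + R / max y.2 1))^β₄
        ≤ K₄^(-β₄) * (K₄^β₄ * (Real.log (1 + r/Nm))^β₄) :=
          mul_le_mul_of_nonneg_left hh (Real.rpow_nonneg hK₄.le _)
      _ = (Real.log (1 + r/Nm))^β₄ := by
          rw [← mul_assoc, ← Real.rpow_add hK₄, neg_add_cancel, Real.rpow_zero, one_mul]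
  have h0 : (2:ℝ)^(-(d:ℝ)-α) * R^(-(d:ℝ)-α) ≤ r^(-(d:ℝ)-α) := by
    have he : -(d:ℝ) - α ≤ 0 := by
      have : (0:ℝ) ≤ (d:ℝ) := Nat.cast_nonneg d
      linarith
    calc (2:ℝ)^(-(d:ℝ)-α) * R^(-(d:ℝ)-α) = (2*R)^(-(d:ℝ)-α) :=
          (Real.mul_rpow (by norm_num) hRpos.le).symm
      _ ≤ r^(-(d:ℝ)-α) := Real.rpow_le_rpow_of_nonpos hrpos hrup he
  have hRE : R ^ (-(d:ℝ)-α-β₁-β₂) = R^(-(d:ℝ)-α) * R^(-β₁) * R^(-β₂) := by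
    rw [show -(d:ℝ)-α-β₁-β₂ = (-(d:ℝ)-α) + -β₁ + -β₂ by ring, Real.rpow_add hRpos,
      Real.rpow_add hRpos]
  -- nonnegativity facts
  have nA : 0 ≤ (min (min z.2 y.2 / r) 1)^β₁ :=
    Real.rpow_nonneg (le_min (div_nonneg hminzy hrpos.le) zero_le_one) _
  have nB : 0 ≤ (min (max z.2 y.2 / r) 1)^β₂ :=
    Real.rpow_nonneg (le_min (div_nonneg (le_trans hy2.le (le_max_right _ _)) hrpos.le)
      zero_le_one) _
  have nL3 : 0 ≤ (Real.log (1 + Nm/Dn))^β₃ := Real.rpow_nonneg hL3pos.le _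
  have nL4 : 0 ≤ (Real.log (1 + r/Nm))^β₄ := Real.rpow_nonneg hL4pos.le _
  have n1 : 0 ≤ (16:ℝ)^(-β₂) * ((max y.2 1)^β₂ * R^(-β₂)) :=
    mul_nonneg (Real.rpow_nonneg (by norm_num) _)
      (mul_nonneg (Real.rpow_nonneg hm2.le _) (Real.rpow_nonneg hRpos.le _))
  have n3 : 0 ≤ K₃^(-β₃) * (1 + |Real.log y.2|)^β₃ :=
    mul_nonneg (Real.rpow_nonneg hK₃.le _) (Real.rpow_nonneg (by positivity) _)
  have n4 : 0 ≤ K₄^(-β₄) * (Real.log (1 + R / max y.2 1))^β₄ :=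
    mul_nonneg (Real.rpow_nonneg hK₄.le _)
      (Real.rpow_nonneg hlogT0 _)
  calc C₂⁻¹ * ((2:ℝ)^(-(d:ℝ)-α) * ((16:ℝ)^(-β₁) * ((16:ℝ)^(-β₂) * (K₃^(-β₃) * K₄^(-β₄))))) *
        ((min y.2 1)^β₁ * (max y.2 1)^β₂ * R^(-(d:ℝ)-α-β₁-β₂) * (1 + |Real.log y.2|)^β₃ *
          (Real.log (1 + R / max y.2 1))^β₄)
      = ((2:ℝ)^(-(d:ℝ)-α) * R^(-(d:ℝ)-α)) * (C₂⁻¹ *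
          ((16:ℝ)^(-β₁) * ((min y.2 1)^β₁ * R^(-β₁)) *
            ((16:ℝ)^(-β₂) * ((max y.2 1)^β₂ * R^(-β₂))) *
            (K₃^(-β₃) * (1 + |Real.log y.2|)^β₃) *
            (K₄^(-β₄) * (Real.log (1 + R / max y.2 1))^β₄))) := by
        rw [hRE]; ring
    _ ≤ r^(-(d:ℝ)-α) * (C₂⁻¹ *
          ((min (min z.2 y.2 / r) 1)^β₁ * (min (max z.2 y.2 / r) 1)^β₂ *
            (Real.log (1 + Nm/Dn))^β₃ * (Real.log (1 + r/Nm))^β₄)) := by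
        apply mul_le_mul h0 ?_ ?_ hre_nonneg
        · apply mul_le_mul_of_nonneg_left ?_ (inv_nonneg.mpr hC2pos.le)
          apply mul_le_mul (mul_le_mul (mul_le_mul h1 h2 n1 nA) h3 n3 (mul_nonneg nA nB)) h4
            n4 (mul_nonneg (mul_nonneg nA nB) nL3)
        · apply mul_nonneg (inv_nonneg.mpr hC2pos.le)
          exact mul_nonneg (mul_nonneg (mul_nonneg
            (mul_nonneg (Real.rpow_nonneg (by norm_num) _)
              (mul_nonneg (Real.rpow_nonneg hm1.le _) (Real.rpow_nonneg hRpos.le _))) n1) n3) n4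

end
end

section
/- Assume the (A3) setting and let p satisfy (α−1)₊ < p < α + (β₁ ∧ β₂). Set M = 1 + (((β₂+α−p)/(β₁+α−p)) ∨ 1) and ε = β₁ + α − p − (β₂+α−p)/M. Then there exists a constant c > 0, depending only on d, α, p, β₁, β₂, β₃, β₄ and C₂, such that J(z, y) ≤ c z_d^{β₁−ε} k(y) for all z ∈ D(1/2, 1/2) and all y ∈ ℝ^d_+ ∖ D(1,1), where k(y) = (y_d ∧ 1)^{β₁} (y_d ∨ 1)^{β₂} |y|^{−d−α−β₁−β₂} (1 + |log y_d|)^{β₃} (log(1 + |y|/(y_d ∨ 1)))^{β₄}. -/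
open MeasureTheory Real

noncomputable section

lemma my_log2_le_one : Real.log 2 ≤ 1 := by
  have := Real.log_le_sub_one_of_pos (by norm_num : (0:ℝ) < 2); linarith

lemma my_log_add (b : ℝ) (hb : 0 < b) : Real.log (1 + b) ≤ 1 + |Real.log b| := by
  rcases le_or_gt b 1 with h | h
  · have h1 : Real.log (1 + b) ≤ Real.log 2 :=
      Real.log_le_log (by linarith) (by linarith)
    have := abs_nonneg (Real.log b)
    linarith [my_log2_le_one]
  · have h1 : Real.log (1 + b) ≤ Real.log (2 * b) :=
      Real.log_le_log (by linarith) (by linarith)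
    rw [Real.log_mul (by norm_num) hb.ne'] at h1
    have := le_abs_self (Real.log b)
    linarith [my_log2_le_one]

lemma my_log_inv (b : ℝ) (hb : 0 < b) : Real.log (1 + 1 / b) ≤ 1 + |Real.log b| := by
  have := my_log_add (1 / b) (by positivity)
  rw [one_div] at this ⊢
  rwa [Real.log_inv, abs_neg] at this

lemma my_log_le_rpow {x s : ℝ} (hx : 1 ≤ x) (hs : 0 < s) : Real.log x ≤ x ^ s / s := by
  have hx0 : 0 < x := lt_of_lt_of_le one_pos hx
  have h1 : Real.log (x ^ s) = s * Real.log x := Real.log_rpow hx0 s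
  have h2 : Real.log (x ^ s) ≤ x ^ s - 1 :=
    Real.log_le_sub_one_of_pos (Real.rpow_pos_of_pos hx0 s)
  rw [h1] at h2
  rw [div_eq_inv_mul, ← inv_mul_cancel_left₀ hs.ne' (Real.log x)]
  have : s * Real.log x ≤ x ^ s := by linarith
  exact mul_le_mul_of_nonneg_left this (by positivity)

lemma my_log_inv_rpow {a s : ℝ} (ha : 0 < a) (ha1 : a ≤ 1) (hs : 0 < s) :
    Real.log (1 + 1 / a) ≤ 2 ^ s / s * a ^ (-s) := by
  have hia : 1 ≤ 1 / a := by rw [le_div_iff₀ ha]; linarith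
  have h1 : Real.log (1 + 1 / a) ≤ Real.log (2 / a) := by
    apply Real.log_le_log (by linarith)
    have h2a : 2 / a = 1 / a + 1 / a := by ring
    rw [h2a]; linarith
  have h2 : Real.log (2 / a) ≤ (2 / a) ^ s / s :=
    my_log_le_rpow (by rw [le_div_iff₀ ha]; linarith) hs
  have h3 : (2 / a) ^ s / s = 2 ^ s / s * a ^ (-s) := by
    rw [Real.div_rpow (by norm_num) ha.le, Real.rpow_neg ha.le]
    ring
  linarith [h3 ▸ h2]

lemma my_one_le_rpow {a e : ℝ} (ha : 0 < a) (ha1 : a ≤ 1) (he : e ≤ 0) : 1 ≤ a ^ e :=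
  Real.one_le_rpow_of_pos_of_le_one_of_nonpos ha ha1 he

lemma my_one_le_rpow' {a e : ℝ} (ha : 0 < a) (ha1 : a ≤ 1) (he : e ≤ 0) : 1 ≤ a ^ e :=
  Real.one_le_rpow_of_pos_of_le_one_of_nonpos ha ha1 he

lemma my_absorb3 (A B c₁ : ℝ) (hA : 1 ≤ A) (hB : 1 ≤ B) (hc : 0 ≤ c₁) :
    1 + B + c₁ * A + B ≤ (3 + c₁) * (A * B) := by
  nlinarith [mul_nonneg (sub_nonneg.2 hA) (sub_nonneg.2 hB),
    mul_nonneg hc (mul_nonneg (le_trans zero_le_one hA) (sub_nonneg.2 hB)),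
    mul_nonneg (sub_nonneg.2 hA) (le_trans zero_le_one hB)]

lemma my_arg_bound {a b : ℝ} (ha : 0 < a) (hb : 0 < b) :
    1 + max a b / min a b ≤ (1 + a) * ((1 + b) * ((1 + 1 / a) * (1 + 1 / b))) := by
  have hminab : 0 < min a b := lt_min ha hb
  have e1 : 1 + max a b / min a b ≤ (1 + max a b) * (1 + 1 / min a b) := by
    have h1 : 0 ≤ max a b := le_trans ha.le (le_max_left a b)
    have h2 : 0 ≤ 1 / min a b := by positivity
    have h3 : max a b / min a b = max a b * (1 / min a b) := by ring
    nlinarith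
  have e2 : 1 + max a b ≤ (1 + a) * (1 + b) := by
    have h1 : max a b ≤ a + b :=
      max_le (le_add_of_nonneg_right hb.le) (le_add_of_nonneg_left ha.le)
    nlinarith [mul_pos ha hb]
  have e3 : 1 + 1 / min a b ≤ (1 + 1 / a) * (1 + 1 / b) := by
    have h1 : 1 / min a b ≤ 1 / a + 1 / b := by
      rcases le_total a b with h | h
      · rw [min_eq_left h]; have : 0 ≤ 1 / b := by positivity
        linarith
      · rw [min_eq_right h]; have : 0 ≤ 1 / a := by positivity
        linarith
    nlinarith [mul_pos (one_div_pos.2 ha) (one_div_pos.2 hb)]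
  calc 1 + max a b / min a b ≤ (1 + max a b) * (1 + 1 / min a b) := e1
    _ ≤ (1 + a) * (1 + b) * ((1 + 1 / a) * (1 + 1 / b)) := by
        apply mul_le_mul e2 e3 (by positivity) (by positivity)
    _ = (1 + a) * ((1 + b) * ((1 + 1 / a) * (1 + 1 / b))) := by ring

lemma my_claim3 (β₃ S : ℝ) (hβ₃ : 0 ≤ β₃) (hS : 0 < S) :
    ∃ K : ℝ, 0 < K ∧ ∀ a b r : ℝ, 0 < a → a ≤ 1 / 2 → 0 < b → 1 / 2 ≤ r →
      Real.log (1 + min (max a b) r / min (min a b) r) ^ β₃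
        ≤ K * (a ^ (-(S / 2)) * (1 + |Real.log b|) ^ β₃) := by
  rcases eq_or_lt_of_le hβ₃ with h0 | h0
  · refine ⟨1, one_pos, fun a b r ha ha2 hb hr => ?_⟩
    rw [← h0]
    simp only [Real.rpow_zero, one_mul, mul_one]
    exact my_one_le_rpow' ha (by linarith) (by linarith)
  · set s : ℝ := S / (2 * β₃) with hs_def
    have hs : 0 < s := by positivity
    set cs : ℝ := 2 ^ s / s with hcs_def
    have hcs : 0 < cs := by positivity
    refine ⟨(3 + cs) ^ β₃, Real.rpow_pos_of_pos (by linarith) _, fun a b r ha ha2 hb hr => ?_⟩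
    have hr0 : 0 < r := by linarith
    have hminab : 0 < min a b := lt_min ha hb
    have hmaxab : 0 < max a b := lt_max_of_lt_left ha
    have hmm : min (min a b) r = min a b := min_eq_left (le_trans (min_le_left a b) (by linarith))
    have hargnn : 0 ≤ min (max a b) r / min (min a b) r := by positivity
    have harg1 : min (max a b) r / min (min a b) r ≤ max a b / min a b := by
      rw [hmm]; gcongr; exact min_le_left _ _
    have hlogsum : Real.log (1 + min (max a b) r / min (min a b) r)
        ≤ Real.log (1 + a) + (Real.log (1 + b) +
          (Real.log (1 + 1 / a) + Real.log (1 + 1 / b))) := by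
      have h1 : Real.log (1 + min (max a b) r / min (min a b) r)
          ≤ Real.log ((1 + a) * ((1 + b) * ((1 + 1 / a) * (1 + 1 / b)))) :=
        Real.log_le_log (by linarith) (le_trans (by linarith [harg1]) (my_arg_bound ha hb))
      rwa [Real.log_mul (by positivity) (by positivity),
        Real.log_mul (by positivity) (by positivity),
        Real.log_mul (by positivity) (by positivity)] at h1
    have hba : Real.log (1 + a) ≤ 1 := by
      have := Real.log_le_log (by linarith : (0:ℝ) < 1 + a) (by linarith : 1 + a ≤ 2)
      linarith [my_log2_le_one]
    have hbb : Real.log (1 + b) ≤ 1 + |Real.log b| := my_log_add b hb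
    have hbb' : Real.log (1 + 1 / b) ≤ 1 + |Real.log b| := my_log_inv b hb
    have hbA : Real.log (1 + 1 / a) ≤ cs * a ^ (-s) :=
      my_log_inv_rpow ha (by linarith) hs
    have hA1 : 1 ≤ a ^ (-s) := my_one_le_rpow' ha (by linarith) (by linarith)
    have hB1 : 1 ≤ 1 + |Real.log b| := by
      have := abs_nonneg (Real.log b); linarith
    have hL : Real.log (1 + min (max a b) r / min (min a b) r)
        ≤ (3 + cs) * (a ^ (-s) * (1 + |Real.log b|)) := by
      have habs := my_absorb3 (a ^ (-s)) (1 + |Real.log b|) cs hA1 hB1 hcs.le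
      linarith
    have hL0 : 0 ≤ Real.log (1 + min (max a b) r / min (min a b) r) :=
      Real.log_nonneg (by linarith)
    have hexp : (a ^ (-s)) ^ β₃ = a ^ (-(S / 2)) := by
      rw [← Real.rpow_mul ha.le]
      congr 1
      rw [hs_def]; field_simp
    calc Real.log (1 + min (max a b) r / min (min a b) r) ^ β₃
        ≤ ((3 + cs) * (a ^ (-s) * (1 + |Real.log b|))) ^ β₃ :=
          Real.rpow_le_rpow hL0 hL hβ₃
      _ = (3 + cs) ^ β₃ * (a ^ (-(S / 2)) * (1 + |Real.log b|) ^ β₃) := by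
          rw [Real.mul_rpow (by linarith) (by positivity),
            Real.mul_rpow (by positivity) (by positivity), hexp]

lemma my_two_div_rpow {x y r β₁ β₂ : ℝ} (hx : 0 ≤ x) (hy : 0 ≤ y) (hr : 0 < r) :
    (x / r) ^ β₁ * (y / r) ^ β₂ = x ^ β₁ * y ^ β₂ * r ^ (-β₁ - β₂) := by
  rw [Real.div_rpow hx hr.le, Real.div_rpow hy hr.le,
    show -β₁ - β₂ = -β₁ + -β₂ by ring, Real.rpow_add hr,
    Real.rpow_neg hr.le, Real.rpow_neg hr.le]
  field_simp

lemma my_claim1 (β₁ β₂ E S : ℝ) (hβ₁ : 0 ≤ β₁) (hβ₂ : 0 ≤ β₂)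
    (hS : 0 < S) (hSE : S ≤ E) (hdd : β₁ - β₂ ≤ E - S)
    (a b r : ℝ) (ha : 0 < a) (ha2 : a < 1 / 2) (hb : 0 < b) (hr : 1 / 2 ≤ r) :
    min (min a b / r) 1 ^ β₁ * min (max a b / r) 1 ^ β₂
      ≤ a ^ (β₁ - E + S) * (min b 1 ^ β₁ * (max b 1 ^ β₂ * r ^ (-β₁ - β₂))) := by
  have hr0 : 0 < r := by linarith
  have hrneg : (0:ℝ) ≤ r ^ (-β₁ - β₂) := Real.rpow_nonneg hr0.le _
  rcases le_or_gt a b with hab | hab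
  · have hmin : min a b = a := min_eq_left hab
    have hmax : max a b = b := max_eq_right hab
    have hF1 : min (min a b / r) 1 ^ β₁ ≤ (a / r) ^ β₁ := by
      rw [hmin]
      exact Real.rpow_le_rpow (le_min (by positivity) zero_le_one) (min_le_left _ _) hβ₁
    have hF2 : min (max a b / r) 1 ^ β₂ ≤ (b / r) ^ β₂ := by
      rw [hmax]
      exact Real.rpow_le_rpow (le_min (by positivity) zero_le_one) (min_le_left _ _) hβ₂
    have step : min (min a b / r) 1 ^ β₁ * min (max a b / r) 1 ^ β₂
        ≤ a ^ β₁ * b ^ β₂ * r ^ (-β₁ - β₂) := by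
      calc min (min a b / r) 1 ^ β₁ * min (max a b / r) 1 ^ β₂
          ≤ (a / r) ^ β₁ * (b / r) ^ β₂ :=
            mul_le_mul hF1 hF2 (Real.rpow_nonneg (le_min (by positivity) zero_le_one) _)
              (Real.rpow_nonneg (by positivity) _)
        _ = a ^ β₁ * b ^ β₂ * r ^ (-β₁ - β₂) := my_two_div_rpow ha.le hb.le hr0
    rcases le_or_gt b 1 with hb1 | hb1
    · have hminb : min b 1 = b := min_eq_left hb1
      have hmaxb : max b 1 = 1 := max_eq_right hb1
      have hES : a ^ (E - S) ≤ b ^ (β₁ - β₂) := by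
        rcases le_or_gt β₂ β₁ with hcb | hcb
        · calc a ^ (E - S) ≤ b ^ (E - S) := Real.rpow_le_rpow ha.le hab (by linarith)
            _ ≤ b ^ (β₁ - β₂) :=
              Real.rpow_le_rpow_of_exponent_ge hb hb1 (by linarith)
        · calc a ^ (E - S) ≤ 1 := Real.rpow_le_one ha.le (by linarith) (by linarith)
            _ ≤ b ^ (β₁ - β₂) :=
              Real.one_le_rpow_of_pos_of_le_one_of_nonpos hb hb1 (by linarith)
      have key : a ^ β₁ * b ^ β₂ ≤ a ^ (β₁ - E + S) * b ^ β₁ := by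
        have e1 : a ^ β₁ = a ^ (β₁ - E + S) * a ^ (E - S) := by
          rw [← Real.rpow_add ha]; congr 1; ring
        have e2 : b ^ β₁ = b ^ (β₁ - β₂) * b ^ β₂ := by
          rw [← Real.rpow_add hb]; congr 1; ring
        rw [e1, e2, mul_assoc]
        refine mul_le_mul_of_nonneg_left ?_ (Real.rpow_nonneg ha.le _)
        exact mul_le_mul_of_nonneg_right hES (Real.rpow_nonneg hb.le _)
      calc min (min a b / r) 1 ^ β₁ * min (max a b / r) 1 ^ β₂
          ≤ a ^ β₁ * b ^ β₂ * r ^ (-β₁ - β₂) := step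
        _ ≤ a ^ (β₁ - E + S) * b ^ β₁ * r ^ (-β₁ - β₂) :=
            mul_le_mul_of_nonneg_right key hrneg
        _ = a ^ (β₁ - E + S) * (min b 1 ^ β₁ * (max b 1 ^ β₂ * r ^ (-β₁ - β₂))) := by
            rw [hminb, hmaxb, Real.one_rpow]; ring
    · have hminb : min b 1 = 1 := min_eq_right hb1.le
      have hmaxb : max b 1 = b := max_eq_left hb1.le
      have key : a ^ β₁ ≤ a ^ (β₁ - E + S) :=
        Real.rpow_le_rpow_of_exponent_ge ha (by linarith) (by linarith)
      calc min (min a b / r) 1 ^ β₁ * min (max a b / r) 1 ^ β₂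
          ≤ a ^ β₁ * b ^ β₂ * r ^ (-β₁ - β₂) := step
        _ ≤ a ^ (β₁ - E + S) * b ^ β₂ * r ^ (-β₁ - β₂) := by
            refine mul_le_mul_of_nonneg_right
              (mul_le_mul_of_nonneg_right key (Real.rpow_nonneg hb.le _)) hrneg
        _ = a ^ (β₁ - E + S) * (min b 1 ^ β₁ * (max b 1 ^ β₂ * r ^ (-β₁ - β₂))) := by
            rw [hminb, hmaxb, Real.one_rpow]; ring
  · have hmin : min a b = b := min_eq_right hab.le
    have hmax : max a b = a := max_eq_left hab.le
    have hminb : min b 1 = b := min_eq_left (by linarith)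
    have hmaxb : max b 1 = 1 := max_eq_right (by linarith)
    have step : min (min a b / r) 1 ^ β₁ * min (max a b / r) 1 ^ β₂
        ≤ b ^ β₁ * a ^ β₂ * r ^ (-β₁ - β₂) := by
      calc min (min a b / r) 1 ^ β₁ * min (max a b / r) 1 ^ β₂
          ≤ (b / r) ^ β₁ * (a / r) ^ β₂ := by
            rw [hmin, hmax]
            exact mul_le_mul
              (Real.rpow_le_rpow (le_min (by positivity) zero_le_one) (min_le_left _ _) hβ₁)
              (Real.rpow_le_rpow (le_min (by positivity) zero_le_one) (min_le_left _ _) hβ₂)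
              (Real.rpow_nonneg (le_min (by positivity) zero_le_one) _)
              (Real.rpow_nonneg (by positivity) _)
        _ = b ^ β₁ * a ^ β₂ * r ^ (-β₁ - β₂) := my_two_div_rpow hb.le ha.le hr0
    have key : a ^ β₂ ≤ a ^ (β₁ - E + S) :=
      Real.rpow_le_rpow_of_exponent_ge ha (by linarith) (by linarith)
    calc min (min a b / r) 1 ^ β₁ * min (max a b / r) 1 ^ β₂
        ≤ b ^ β₁ * a ^ β₂ * r ^ (-β₁ - β₂) := step
      _ ≤ b ^ β₁ * a ^ (β₁ - E + S) * r ^ (-β₁ - β₂) :=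
          mul_le_mul_of_nonneg_right
            (mul_le_mul_of_nonneg_left key (Real.rpow_nonneg hb.le _)) hrneg
      _ = a ^ (β₁ - E + S) * (min b 1 ^ β₁ * (max b 1 ^ β₂ * r ^ (-β₁ - β₂))) := by
          rw [hminb, hmaxb, Real.one_rpow]; ring
lemma my_absorb4 (A G c₁ : ℝ) (hA : 1 ≤ A) (hG : Real.log 2 ≤ G) (hc : 0 ≤ c₁) :
    2 + G + c₁ * A ≤ (3 + (2 + c₁) / Real.log 2) * (A * G) := by
  have hl2 : 0 < Real.log 2 := Real.log_pos one_lt_two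
  have hG0 : 0 < G := lt_of_lt_of_le hl2 hG
  have h1 : A * Real.log 2 ≤ A * G := mul_le_mul_of_nonneg_left hG (by linarith)
  have h2 : A ≤ A * G / Real.log 2 := by rw [le_div_iff₀ hl2]; linarith
  have h3 : G ≤ A * G := le_mul_of_one_le_left hG0.le hA
  have hct : c₁ * A ≤ c₁ * (A * G / Real.log 2) := mul_le_mul_of_nonneg_left h2 hc
  have h4 : 1 ≤ A * G / Real.log 2 := le_trans hA h2
  have heq : (3 + (2 + c₁) / Real.log 2) * (A * G)
      = 3 * (A * G) + 2 * (A * G / Real.log 2) + c₁ * (A * G / Real.log 2) := by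
    field_simp; ring
  have hAG : 0 < A * G := mul_pos (by linarith) hG0
  rw [heq]; linarith

lemma my_claim4 (β₄ S : ℝ) (hβ₄ : 0 ≤ β₄) (hS : 0 < S) :
    ∃ K : ℝ, 0 < K ∧ ∀ a b r w : ℝ, 0 < a → a ≤ 1 / 2 → 0 < b → 1 / 2 ≤ r → 1 ≤ w →
      b ≤ w → r ≤ 2 * w →
      Real.log (1 + r / min (max a b) r) ^ β₄
        ≤ K * (a ^ (-(S / 2)) * Real.log (1 + w / max b 1) ^ β₄) := by
  rcases eq_or_lt_of_le hβ₄ with h0 | h0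
  · refine ⟨1, one_pos, fun a b r w ha ha2 hb hr hw hbw hr2w => ?_⟩
    rw [← h0]
    simp only [Real.rpow_zero, one_mul, mul_one]
    exact my_one_le_rpow' ha (by linarith) (by linarith)
  · have hl2 : 0 < Real.log 2 := Real.log_pos one_lt_two
    set s : ℝ := S / (2 * β₄) with hs_def
    have hs : 0 < s := by positivity
    set cs : ℝ := 2 ^ s / s with hcs_def
    have hcs : 0 < cs := by positivity
    set K' : ℝ := 3 + (2 + cs) / Real.log 2 with hK'_def
    have hK'3 : (3:ℝ) ≤ K' := by
      have h : 0 ≤ (2 + cs) / Real.log 2 := by positivity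
      rw [hK'_def]; linarith
    have hK'0 : 0 < K' := by linarith
    refine ⟨K' ^ β₄, Real.rpow_pos_of_pos hK'0 _, fun a b r w ha ha2 hb hr hw hbw hr2w => ?_⟩
    have hr0 : 0 < r := by linarith
    have hMx : 0 < max a b := lt_max_of_lt_left ha
    have hminr : 0 < min (max a b) r := lt_min hMx hr0
    have hL0 : 0 ≤ Real.log (1 + r / min (max a b) r) := by
      have h : 0 ≤ r / min (max a b) r := by positivity
      exact Real.log_nonneg (by linarith)
    have hA1 : 1 ≤ a ^ (-s) := my_one_le_rpow' ha (by linarith) (by linarith)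
    have hexp : (a ^ (-s)) ^ β₄ = a ^ (-(S / 2)) := by
      rw [← Real.rpow_mul ha.le]
      congr 1
      rw [hs_def]; field_simp
    have hstep : r / min (max a b) r ≤ 1 + r / max a b := by
      rcases le_total (max a b) r with h | h
      · rw [min_eq_left h]
        have : 0 ≤ r / max a b := by positivity
        linarith
      · rw [min_eq_right h, div_self hr0.ne']
        have : 0 ≤ r / max a b := by positivity
        linarith
    rcases le_total 1 b with hb1 | hb1
    · -- b ≥ 1
      have hmb : max b 1 = b := max_eq_left hb1
      have hQ1 : 1 ≤ w / max b 1 := by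
        rw [hmb, le_div_iff₀ (by linarith)]; linarith
      have hG0' : 0 ≤ Real.log (1 + w / max b 1) := Real.log_nonneg (by linarith)
      have hQ : r / max a b ≤ 2 * (w / max b 1) := by
        rw [hmb]
        calc r / max a b ≤ 2 * w / b := by
              apply div_le_div₀ (by linarith) hr2w hb (le_max_right a b)
          _ = 2 * (w / b) := by ring
      have harg : 1 + r / min (max a b) r ≤ (1 + w / max b 1) ^ (3:ℕ) := by
        have h1 : 1 + r / min (max a b) r ≤ 2 + 2 * (w / max b 1) := by linarith
        nlinarith [hQ1, sq_nonneg (w / max b 1 - 1), sq_nonneg (w / max b 1)]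
      have hlog : Real.log (1 + r / min (max a b) r)
          ≤ 3 * Real.log (1 + w / max b 1) := by
        calc Real.log (1 + r / min (max a b) r)
            ≤ Real.log ((1 + w / max b 1) ^ (3:ℕ)) := by
              apply Real.log_le_log (by positivity) harg
          _ = 3 * Real.log (1 + w / max b 1) := by rw [Real.log_pow]; norm_num
      calc Real.log (1 + r / min (max a b) r) ^ β₄
          ≤ (3 * Real.log (1 + w / max b 1)) ^ β₄ :=
            Real.rpow_le_rpow hL0 hlog hβ₄
        _ = 3 ^ β₄ * Real.log (1 + w / max b 1) ^ β₄ :=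
            Real.mul_rpow (by norm_num) hG0'
        _ ≤ K' ^ β₄ * (a ^ (-(S / 2)) * Real.log (1 + w / max b 1) ^ β₄) := by
            have hK : (3:ℝ) ^ β₄ ≤ K' ^ β₄ := Real.rpow_le_rpow (by norm_num) hK'3 hβ₄
            have hA1' : 1 ≤ a ^ (-(S / 2)) := my_one_le_rpow' ha (by linarith) (by linarith)
            calc 3 ^ β₄ * Real.log (1 + w / max b 1) ^ β₄
                ≤ K' ^ β₄ * Real.log (1 + w / max b 1) ^ β₄ :=
                  mul_le_mul_of_nonneg_right hK (Real.rpow_nonneg hG0' _)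
              _ ≤ K' ^ β₄ * (a ^ (-(S / 2)) * Real.log (1 + w / max b 1) ^ β₄) := by
                  apply mul_le_mul_of_nonneg_left _ (Real.rpow_nonneg hK'0.le _)
                  exact le_mul_of_one_le_left (Real.rpow_nonneg hG0' _) hA1'
    · -- b ≤ 1
      have hmb : max b 1 = 1 := max_eq_right hb1
      have hQw : w / max b 1 = w := by rw [hmb, div_one]
      have hGw : Real.log 2 ≤ Real.log (1 + w) := Real.log_le_log (by norm_num) (by linarith)
      have hQa : r / max a b ≤ 2 * w / a :=
        div_le_div₀ (by linarith) hr2w ha (le_max_left a b)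
      have harg : 1 + r / min (max a b) r ≤ 4 * ((1 + w) * (1 + 1 / a)) := by
        have h1 : 1 + r / min (max a b) r ≤ 2 + 2 * w / a := by linarith
        have hia : 0 < 1 / a := by positivity
        have h2 : 2 * w / a = 2 * (w * (1 / a)) := by ring
        nlinarith [mul_nonneg (by linarith : (0:ℝ) ≤ w) hia.le]
      have hlog : Real.log (1 + r / min (max a b) r)
          ≤ 2 + Real.log (1 + w) + cs * a ^ (-s) := by
        have h1 : Real.log (1 + r / min (max a b) r)
            ≤ Real.log (4 * ((1 + w) * (1 + 1 / a))) := by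
          apply Real.log_le_log (by positivity) harg
        rw [Real.log_mul (by norm_num) (by positivity),
          Real.log_mul (by positivity) (by positivity)] at h1
        have hlog4 : Real.log 4 ≤ 2 := by
          rw [show (4:ℝ) = 2 ^ (2:ℕ) by norm_num, Real.log_pow]
          push_cast
          linarith [my_log2_le_one]
        have h2 : Real.log (1 + 1 / a) ≤ cs * a ^ (-s) :=
          my_log_inv_rpow ha (by linarith) hs
        linarith
      have habs := my_absorb4 (a ^ (-s)) (Real.log (1 + w)) cs hA1 hGw hcs.le
      have hL : Real.log (1 + r / min (max a b) r) ≤ K' * (a ^ (-s) * Real.log (1 + w)) := by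
        rw [hK'_def]; linarith
      have hGw0 : 0 ≤ Real.log (1 + w) := le_trans hl2.le hGw
      calc Real.log (1 + r / min (max a b) r) ^ β₄
          ≤ (K' * (a ^ (-s) * Real.log (1 + w))) ^ β₄ :=
            Real.rpow_le_rpow hL0 hL hβ₄
        _ = K' ^ β₄ * (a ^ (-(S / 2)) * Real.log (1 + w) ^ β₄) := by
            rw [Real.mul_rpow hK'0.le (by positivity),
              Real.mul_rpow (Real.rpow_nonneg ha.le _) hGw0, hexp]
        _ = K' ^ β₄ * (a ^ (-(S / 2)) * Real.log (1 + w / max b 1) ^ β₄) := by rw [hQw]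
lemma my_core (β₁ β₂ β₃ β₄ E S : ℝ) (hβ₁ : 0 ≤ β₁) (hβ₂ : 0 ≤ β₂) (hβ₃ : 0 ≤ β₃)
    (hβ₄ : 0 ≤ β₄) (hS : 0 < S) (hSE : S ≤ E) (hdd : β₁ - β₂ ≤ E - S) :
    ∃ C : ℝ, 0 < C ∧ ∀ a b r w : ℝ, 0 < a → a < 1 / 2 → 0 < b → 1 / 2 ≤ r → 1 ≤ w →
      b ≤ w → r ≤ 2 * w →
      min (min a b / r) 1 ^ β₁ * min (max a b / r) 1 ^ β₂ *
        Real.log (1 + min (max a b) r / min (min a b) r) ^ β₃ *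
        Real.log (1 + r / min (max a b) r) ^ β₄
      ≤ C * (a ^ (β₁ - E) * (min b 1 ^ β₁ * (max b 1 ^ β₂ *
          (r ^ (-β₁ - β₂) * ((1 + |Real.log b|) ^ β₃ *
            Real.log (1 + w / max b 1) ^ β₄))))) := by
  obtain ⟨K₃, hK₃, h3⟩ := my_claim3 β₃ S hβ₃ hS
  obtain ⟨K₄, hK₄, h4⟩ := my_claim4 β₄ S hβ₄ hS
  refine ⟨K₃ * K₄, by positivity, fun a b r w ha ha2 hb hr hw hbw hr2w => ?_⟩
  have hr0 : 0 < r := by linarith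
  have h1 := my_claim1 β₁ β₂ E S hβ₁ hβ₂ hS hSE hdd a b r ha ha2 hb hr
  have h3' := h3 a b r ha ha2.le hb hr
  have h4' := h4 a b r w ha ha2.le hb hr hw hbw hr2w
  have hminb : (0:ℝ) ≤ min b 1 := le_min hb.le zero_le_one
  have hmaxb : (0:ℝ) ≤ max b 1 := le_trans zero_le_one (le_max_right b 1)
  have n12 : 0 ≤ min (min a b / r) 1 ^ β₁ * min (max a b / r) 1 ^ β₂ :=
    mul_nonneg (Real.rpow_nonneg (le_min (by positivity) zero_le_one) _)
      (Real.rpow_nonneg (le_min (by positivity) zero_le_one) _)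
  have hargnn : (0:ℝ) ≤ min (max a b) r / min (min a b) r := by positivity
  have n3 : 0 ≤ Real.log (1 + min (max a b) r / min (min a b) r) ^ β₃ :=
    Real.rpow_nonneg (Real.log_nonneg (by linarith)) _
  have hargnn' : (0:ℝ) ≤ r / min (max a b) r := by positivity
  have n4 : 0 ≤ Real.log (1 + r / min (max a b) r) ^ β₄ :=
    Real.rpow_nonneg (Real.log_nonneg (by linarith)) _
  have nR1 : 0 ≤ a ^ (β₁ - E + S) * (min b 1 ^ β₁ * (max b 1 ^ β₂ * r ^ (-β₁ - β₂))) :=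
    mul_nonneg (Real.rpow_nonneg ha.le _)
      (mul_nonneg (Real.rpow_nonneg hminb _)
        (mul_nonneg (Real.rpow_nonneg hmaxb _) (Real.rpow_nonneg hr0.le _)))
  have nX3 : 0 ≤ K₃ * (a ^ (-(S / 2)) * (1 + |Real.log b|) ^ β₃) := by
    have := abs_nonneg (Real.log b)
    exact mul_nonneg hK₃.le (mul_nonneg (Real.rpow_nonneg ha.le _)
      (Real.rpow_nonneg (by linarith) _))
  have step : min (min a b / r) 1 ^ β₁ * min (max a b / r) 1 ^ β₂ *
        Real.log (1 + min (max a b) r / min (min a b) r) ^ β₃ *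
        Real.log (1 + r / min (max a b) r) ^ β₄
      ≤ (a ^ (β₁ - E + S) * (min b 1 ^ β₁ * (max b 1 ^ β₂ * r ^ (-β₁ - β₂)))) *
          (K₃ * (a ^ (-(S / 2)) * (1 + |Real.log b|) ^ β₃)) *
          (K₄ * (a ^ (-(S / 2)) * Real.log (1 + w / max b 1) ^ β₄)) := by
    exact mul_le_mul (mul_le_mul h1 h3' n3 nR1) h4' n4 (mul_nonneg nR1 nX3)
  have ha' : a ^ (β₁ - E) = a ^ (β₁ - E + S) * (a ^ (-(S / 2)) * a ^ (-(S / 2))) := by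
    rw [← Real.rpow_add ha, ← Real.rpow_add ha]; congr 1; ring
  calc min (min a b / r) 1 ^ β₁ * min (max a b / r) 1 ^ β₂ *
        Real.log (1 + min (max a b) r / min (min a b) r) ^ β₃ *
        Real.log (1 + r / min (max a b) r) ^ β₄
      ≤ (a ^ (β₁ - E + S) * (min b 1 ^ β₁ * (max b 1 ^ β₂ * r ^ (-β₁ - β₂)))) *
          (K₃ * (a ^ (-(S / 2)) * (1 + |Real.log b|) ^ β₃)) *
          (K₄ * (a ^ (-(S / 2)) * Real.log (1 + w / max b 1) ^ β₄)) := step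
    _ = K₃ * K₄ * (a ^ (β₁ - E) * (min b 1 ^ β₁ * (max b 1 ^ β₂ *
          (r ^ (-β₁ - β₂) * ((1 + |Real.log b|) ^ β₃ *
            Real.log (1 + w / max b 1) ^ β₄))))) := by
        rw [ha']; ring

lemma my_sq_le_aux {u v : ℝ} (hu : 0 ≤ u) (hv : 0 ≤ v) (h : u ^ 2 ≤ v ^ 2) : u ≤ v := by
  nlinarith

lemma my_geom_real (nz nzy ny z2 y2 R W : ℝ)
    (h_nz : 0 ≤ nz) (h_nzy : 0 ≤ nzy) (h_ny : 0 ≤ ny)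
    (hz1 : nz < 1 / 2) (hz2 : 0 < z2) (hz3 : z2 < 1 / 2) (hy2 : 0 < y2)
    (hn1 : nzy ≤ nz + ny) (hn2 : ny ≤ nz + nzy)
    (hR0 : 0 ≤ R) (hW0 : 0 ≤ W)
    (hR2 : R ^ 2 = nzy ^ 2 + (z2 - y2) ^ 2) (hW2 : W ^ 2 = ny ^ 2 + y2 ^ 2)
    (hcase : 1 ≤ ny ∨ 1 ≤ y2) :
    1 / 2 ≤ R ∧ 1 ≤ W ∧ y2 ≤ W ∧ R ≤ 2 * W ∧ W ≤ 3 * R := by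
  have a3 : nz ^ 2 ≤ 1 / 4 := by linarith [mul_self_le_mul_self h_nz hz1.le]
  have a4 : z2 ^ 2 ≤ 1 / 4 := by linarith [mul_self_le_mul_self hz2.le hz3.le]
  have hr : 1 / 2 ≤ R := by
    apply my_sq_le_aux (by norm_num) hR0
    rw [hR2]
    rcases hcase with h | h
    · have h1 : 1 / 2 ≤ nzy := by linarith
      linarith [mul_self_le_mul_self (by norm_num : (0:ℝ) ≤ 1 / 2) h1,
        sq_nonneg (z2 - y2)]
    · have h1 : 1 / 2 ≤ y2 - z2 := by linarith
      linarith [mul_self_le_mul_self (by norm_num : (0:ℝ) ≤ 1 / 2) h1, sq_nonneg nzy]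
  have hw : 1 ≤ W := by
    apply my_sq_le_aux (by norm_num) hW0
    rw [hW2]
    rcases hcase with h | h
    · linarith [mul_self_le_mul_self (zero_le_one) h, sq_nonneg y2]
    · linarith [mul_self_le_mul_self (zero_le_one) h, sq_nonneg ny]
  have hbw : y2 ≤ W := by
    apply my_sq_le_aux hy2.le hW0
    rw [hW2]; linarith [sq_nonneg ny]
  have hr2w : R ≤ 2 * W := by
    apply my_sq_le_aux hR0 (by linarith)
    have hW1 : 1 ≤ ny ^ 2 + y2 ^ 2 := by
      rw [← hW2]; linarith [mul_self_le_mul_self (zero_le_one) hw]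
    have a1 : nzy ^ 2 ≤ 2 * nz ^ 2 + 2 * ny ^ 2 := by
      linarith [sq_nonneg (nz - ny), mul_self_le_mul_self h_nzy hn1]
    have a2 : (z2 - y2) ^ 2 ≤ 2 * z2 ^ 2 + 2 * y2 ^ 2 := by
      linarith [sq_nonneg (z2 + y2)]
    have e : (2 * W) ^ 2 = 4 * (ny ^ 2 + y2 ^ 2) := by rw [mul_pow, hW2]; norm_num
    rw [hR2, e]; linarith
  have hw3r : W ≤ 3 * R := by
    apply my_sq_le_aux hW0 (by linarith)
    have hX4 : 1 ≤ 4 * (nzy ^ 2 + (z2 - y2) ^ 2) := by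
      rw [← hR2]; linarith [mul_self_le_mul_self (by norm_num : (0:ℝ) ≤ 1 / 2) hr]
    have a1 : ny ^ 2 ≤ 2 * nz ^ 2 + 2 * nzy ^ 2 := by
      linarith [sq_nonneg (nz - nzy), mul_self_le_mul_self h_ny hn2]
    have a2 : y2 ^ 2 ≤ 2 * z2 ^ 2 + 2 * (z2 - y2) ^ 2 := by
      linarith [sq_nonneg (z2 + (z2 - y2))]
    have e : (3 * R) ^ 2 = 9 * (nzy ^ 2 + (z2 - y2) ^ 2) := by rw [mul_pow, hR2]; norm_num
    rw [hW2, e]; linarith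
  exact ⟨hr, hw, hbw, hr2w, hw3r⟩

lemma my_geom {m : ℕ} (z y : Pt m) (hz1 : ‖z.1‖ < 1 / 2) (hz2 : 0 < z.2) (hz3 : z.2 < 1 / 2)
    (hy2 : 0 < y.2) (hy : ¬(‖y.1‖ < 1 ∧ 0 < y.2 ∧ y.2 < 1)) :
    1 / 2 ≤ nrm (z - y) ∧ 1 ≤ nrm y ∧ y.2 ≤ nrm y ∧ nrm (z - y) ≤ 2 * nrm y ∧
      nrm y ≤ 3 * nrm (z - y) := by
  have hcase : 1 ≤ ‖y.1‖ ∨ 1 ≤ y.2 := by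
    by_contra h
    push_neg at h
    exact hy ⟨h.1, hy2, h.2⟩
  have hR0 : 0 ≤ nrm (z - y) := Real.sqrt_nonneg _
  have hW0 : 0 ≤ nrm y := Real.sqrt_nonneg _
  have hR2 : nrm (z - y) ^ 2 = ‖z.1 - y.1‖ ^ 2 + (z.2 - y.2) ^ 2 :=
    Real.sq_sqrt (by positivity)
  have hW2 : nrm y ^ 2 = ‖y.1‖ ^ 2 + y.2 ^ 2 := Real.sq_sqrt (by positivity)
  have hn1 : ‖z.1 - y.1‖ ≤ ‖z.1‖ + ‖y.1‖ := norm_sub_le _ _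
  have hn2 : ‖y.1‖ ≤ ‖z.1‖ + ‖z.1 - y.1‖ := by
    have h : y.1 = z.1 - (z.1 - y.1) := by abel
    calc ‖y.1‖ = ‖z.1 - (z.1 - y.1)‖ := by rw [← h]
      _ ≤ ‖z.1‖ + ‖z.1 - y.1‖ := norm_sub_le _ _
  exact my_geom_real ‖z.1‖ ‖z.1 - y.1‖ ‖y.1‖ z.2 y.2 (nrm (z - y)) (nrm y)
    (norm_nonneg _) (norm_nonneg _) (norm_nonneg _) hz1 hz2 hz3 hy2
    hn1 hn2 hR0 hW0 hR2 hW2 hcase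

theorem stmt_9 (d : ℕ) (hd : 2 ≤ d) (α p β₁ β₂ β₃ β₄ C₂ : ℝ)
    (hα0 : 0 < α) (hα2 : α < 2)
    (hβ₁ : 0 ≤ β₁) (hβ₂ : 0 ≤ β₂) (hβ₃ : 0 ≤ β₃) (hβ₄ : 0 ≤ β₄)
    (h13 : 0 < β₃ → 0 < β₁) (h24 : 0 < β₄ → 0 < β₂) (hC₂ : 1 ≤ C₂)
    (hp1 : max (α - 1) 0 < p) (hp2 : p < α + min β₁ β₂)
    (B : Pt (d - 1) → Pt (d - 1) → ℝ)
    (hB0 : ∀ x y, 0 ≤ B x y)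
    (hBl : ∀ x y : Pt (d - 1), 0 < x.2 → 0 < y.2 →
      C₂⁻¹ * Btilde β₁ β₂ β₃ β₄ x y ≤ B x y)
    (hBu : ∀ x y : Pt (d - 1), 0 < x.2 → 0 < y.2 →
      B x y ≤ C₂ * Btilde β₁ β₂ β₃ β₄ x y) :
    ∃ c : ℝ, 0 < c ∧
      ∀ z y : Pt (d - 1),
        z ∈ (Dbox (1 / 2) (1 / 2) : Set (Pt (d - 1))) →
        0 < y.2 → y ∉ (Dbox 1 1 : Set (Pt (d - 1))) →
        nrm (z - y) ^ (-(d : ℝ) - α) * B z y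
          ≤ c * z.2 ^ (β₁ -
              (β₁ + α - p -
                (β₂ + α - p) / (1 + max ((β₂ + α - p) / (β₁ + α - p)) 1))) *
            kfun d α β₁ β₂ β₃ β₄ y := by
  have hβ₁p : 0 < β₁ + α - p := by
    have h := min_le_left β₁ β₂; linarith
  have hβ₂p : 0 < β₂ + α - p := by
    have h := min_le_right β₁ β₂; linarith
  set Mden : ℝ := 1 + max ((β₂ + α - p) / (β₁ + α - p)) 1 with hMdef
  have hM1 : (1:ℝ) ≤ max ((β₂ + α - p) / (β₁ + α - p)) 1 := le_max_right _ _
  have hM2 : (2:ℝ) ≤ Mden := by rw [hMdef]; linarith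
  have hM0 : (0:ℝ) < Mden := by linarith
  set E : ℝ := β₁ + α - p - (β₂ + α - p) / Mden with hEdef
  have hE0 : 0 < E := by
    have h1 : (β₂ + α - p) / (β₁ + α - p) < Mden := by
      rw [hMdef]; linarith [le_max_left ((β₂ + α - p) / (β₁ + α - p)) 1]
    have h2 : β₂ + α - p < (β₁ + α - p) * Mden := by
      rw [div_lt_iff₀ hβ₁p] at h1; linarith
    have h3 : (β₂ + α - p) / Mden < β₁ + α - p := by
      rw [div_lt_iff₀ hM0]; linarith
    rw [hEdef]; linarith
  have hD0 : 0 < E - (β₁ - β₂) := by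
    have h1 : (β₂ + α - p) / Mden < β₂ + α - p := div_lt_self hβ₂p (by linarith)
    rw [hEdef]; linarith
  set S : ℝ := min E (E - (β₁ - β₂)) with hSdef
  have hS0 : 0 < S := lt_min hE0 hD0
  have hSE : S ≤ E := min_le_left _ _
  have hdd : β₁ - β₂ ≤ E - S := by
    have h : S ≤ E - (β₁ - β₂) := min_le_right _ _
    linarith
  obtain ⟨C, hC0, hcore⟩ := my_core β₁ β₂ β₃ β₄ E S hβ₁ hβ₂ hβ₃ hβ₄ hS0 hSE hdd
  have hd0 : (0:ℝ) ≤ (d:ℝ) := Nat.cast_nonneg d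
  refine ⟨C₂ * C * 3 ^ ((d:ℝ) + α + β₁ + β₂), by positivity, fun z y hz hy0 hyD => ?_⟩
  obtain ⟨hz1, hz2, hz3⟩ := hz
  have hyD' : ¬(‖y.1‖ < 1 ∧ 0 < y.2 ∧ y.2 < 1) := hyD
  obtain ⟨hr, hw, hbw, hr2w, hw3r⟩ := my_geom z y hz1 hz2 hz3 hy0 hyD'
  have hr0 : 0 < nrm (z - y) := by linarith
  have hw0 : 0 < nrm y := by linarith
  have hBt' : Btilde β₁ β₂ β₃ β₄ z y
      ≤ C * (z.2 ^ (β₁ - E) * (min y.2 1 ^ β₁ * (max y.2 1 ^ β₂ *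
        (nrm (z - y) ^ (-β₁ - β₂) * ((1 + |Real.log y.2|) ^ β₃ *
          Real.log (1 + nrm y / max y.2 1) ^ β₄))))) :=
    hcore z.2 y.2 (nrm (z - y)) (nrm y) hz2 hz3 hy0 hr hw hbw hr2w
  have hbu := hBu z y hz2 hy0
  have hk : kfun d α β₁ β₂ β₃ β₄ y = min y.2 1 ^ β₁ * max y.2 1 ^ β₂ *
      nrm y ^ (-(d : ℝ) - α - β₁ - β₂) * (1 + |Real.log y.2|) ^ β₃ *
      Real.log (1 + nrm y / max y.2 1) ^ β₄ := rfl
  have hcomb : nrm (z - y) ^ (-β₁ - β₂) * nrm (z - y) ^ (-(d : ℝ) - α)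
      = nrm (z - y) ^ (-(d : ℝ) - α - β₁ - β₂) := by
    rw [← Real.rpow_add hr0]; congr 1; ring
  have hrne : nrm (z - y) ^ (-(d : ℝ) - α - β₁ - β₂)
      ≤ 3 ^ ((d : ℝ) + α + β₁ + β₂) * nrm y ^ (-(d : ℝ) - α - β₁ - β₂) := by
    have he : -(d : ℝ) - α - β₁ - β₂ ≤ 0 := by linarith
    have h3 : nrm y / 3 ≤ nrm (z - y) := by linarith
    have h1 : nrm (z - y) ^ (-(d : ℝ) - α - β₁ - β₂)
        ≤ (nrm y / 3) ^ (-(d : ℝ) - α - β₁ - β₂) :=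
      Real.rpow_le_rpow_of_nonpos (by linarith) h3 he
    have h2 : (nrm y / 3) ^ (-(d : ℝ) - α - β₁ - β₂)
        = 3 ^ ((d : ℝ) + α + β₁ + β₂) * nrm y ^ (-(d : ℝ) - α - β₁ - β₂) := by
      rw [div_eq_mul_inv, Real.mul_rpow hw0.le (by norm_num : (0:ℝ) ≤ (3:ℝ)⁻¹),
        Real.inv_rpow (by norm_num : (0:ℝ) ≤ (3:ℝ)),
        ← Real.rpow_neg (by norm_num : (0:ℝ) ≤ (3:ℝ)),
        show -(-(d : ℝ) - α - β₁ - β₂) = (d : ℝ) + α + β₁ + β₂ from by ring]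
      ring
    linarith [h2 ▸ h1]
  have hmby : (0:ℝ) ≤ min y.2 1 := le_min hy0.le zero_le_one
  have hmby' : (0:ℝ) ≤ max y.2 1 := le_trans zero_le_one (le_max_right _ _)
  have hlq : (0:ℝ) ≤ Real.log (1 + nrm y / max y.2 1) := by
    have h : 0 ≤ nrm y / max y.2 1 := div_nonneg hw0.le hmby'
    exact Real.log_nonneg (by linarith)
  have hX : 0 ≤ z.2 ^ (β₁ - E) * (min y.2 1 ^ β₁ * (max y.2 1 ^ β₂ *
      ((1 + |Real.log y.2|) ^ β₃ * Real.log (1 + nrm y / max y.2 1) ^ β₄))) := by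
    have h1 := abs_nonneg (Real.log y.2)
    exact mul_nonneg (Real.rpow_nonneg hz2.le _)
      (mul_nonneg (Real.rpow_nonneg hmby _)
        (mul_nonneg (Real.rpow_nonneg hmby' _)
          (mul_nonneg (Real.rpow_nonneg (by linarith) _) (Real.rpow_nonneg hlq _))))
  calc nrm (z - y) ^ (-(d : ℝ) - α) * B z y
      ≤ nrm (z - y) ^ (-(d : ℝ) - α) * (C₂ * Btilde β₁ β₂ β₃ β₄ z y) :=
        mul_le_mul_of_nonneg_left hbu (Real.rpow_nonneg hr0.le _)
    _ ≤ nrm (z - y) ^ (-(d : ℝ) - α) * (C₂ * (C * (z.2 ^ (β₁ - E) *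
          (min y.2 1 ^ β₁ * (max y.2 1 ^ β₂ * (nrm (z - y) ^ (-β₁ - β₂) *
            ((1 + |Real.log y.2|) ^ β₃ *
              Real.log (1 + nrm y / max y.2 1) ^ β₄))))))) := by
        apply mul_le_mul_of_nonneg_left
          (mul_le_mul_of_nonneg_left hBt' (by linarith : (0:ℝ) ≤ C₂))
          (Real.rpow_nonneg hr0.le _)
    _ = C₂ * C * (z.2 ^ (β₁ - E) * (min y.2 1 ^ β₁ * (max y.2 1 ^ β₂ *
          ((1 + |Real.log y.2|) ^ β₃ * Real.log (1 + nrm y / max y.2 1) ^ β₄)))) *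
          (nrm (z - y) ^ (-β₁ - β₂) * nrm (z - y) ^ (-(d : ℝ) - α)) := by ring
    _ = C₂ * C * (z.2 ^ (β₁ - E) * (min y.2 1 ^ β₁ * (max y.2 1 ^ β₂ *
          ((1 + |Real.log y.2|) ^ β₃ * Real.log (1 + nrm y / max y.2 1) ^ β₄)))) *
          nrm (z - y) ^ (-(d : ℝ) - α - β₁ - β₂) := by rw [hcomb]
    _ ≤ C₂ * C * (z.2 ^ (β₁ - E) * (min y.2 1 ^ β₁ * (max y.2 1 ^ β₂ *
          ((1 + |Real.log y.2|) ^ β₃ * Real.log (1 + nrm y / max y.2 1) ^ β₄)))) *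
          (3 ^ ((d : ℝ) + α + β₁ + β₂) * nrm y ^ (-(d : ℝ) - α - β₁ - β₂)) := by
        apply mul_le_mul_of_nonneg_left hrne
        exact mul_nonneg (mul_nonneg (by linarith : (0:ℝ) ≤ C₂) hC0.le) hX
    _ = C₂ * C * 3 ^ ((d : ℝ) + α + β₁ + β₂) * z.2 ^ (β₁ - E) *
          kfun d α β₁ β₂ β₃ β₄ y := by rw [hk]; ring

end
end
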